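/- Under the Algorithm 1 setup with 𝓑 ≠ ∅ and |𝓕 ∩ N_i| ≤ F for all i ∈ V: for every p ∈ {1, …, d} and every k ≥ 0, m_p(k+1) ≥ m_p(k) and M_p(k+1) ≤ M_p(k). -/

import Mathlib

/-- `Psi x n` is the intersection, over all subsets `S` of the (finite) index set
with `|S| = m - n` (where `m` is the cardinality of the index set), of the convex
hull of the points indexed by `S`. -/
def Psi {d : ℕ} {ι : Type*} [Fintype ι] (x : ι → (Fin d → ℝ)) (n : ℕ) :
    Set (Fin d → ℝ) :=
  ⋂ S ∈ {S : Finset ι | S.card = Fintype.card ι - n},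
    convexHull ℝ (x '' (S : Set ι))

/-- The setup of Algorithm 1: `G` is the (undirected) communication graph on the
finite vertex set `V` in which every vertex has at least `(d+1)F + 1` neighbors,
`Fset` is the set of misbehaving agents, `x k i` is the state of agent `i` at time
`k`, and `msg k j i` is the value agent `j` sends to agent `i` at time `k` (equal
to `x k j` whenever `j` is benign).  Every benign agent `i` updates at time `k` by
sorting on coordinate `p = (k % d) + 1` (0-indexed: `k % d`): it chooses sets
`Y`, `Z` of `(d+1)F + 1` neighbors whose received values are smallest (resp.
largest) in that coordinate, picks middle points `y ∈ Ψ(Y-values, F)` and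
`z ∈ Ψ(Z-values, F)`, and sets `x (k+1) i = (x k i + y + z) / 3`. -/
structure Algo1 {V : Type*} [Fintype V] [DecidableEq V]
    (d F : ℕ) (hd : 0 < d) (G : SimpleGraph V) [DecidableRel G.Adj]
    (Fset : Finset V) (x : ℕ → V → (Fin d → ℝ))
    (msg : ℕ → V → V → (Fin d → ℝ)) : Prop where
  degree : ∀ i : V, (d + 1) * F + 1 ≤ (G.neighborFinset i).card
  benign_msg : ∀ (k : ℕ) (j i : V), j ∉ Fset → msg k j i = x k j
  update : ∀ (k : ℕ) (i : V), i ∉ Fset →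
    ∃ (Y Z : Finset V) (yv zv : Fin d → ℝ),
      Y ⊆ G.neighborFinset i ∧ Z ⊆ G.neighborFinset i ∧
      Y.card = (d + 1) * F + 1 ∧ Z.card = (d + 1) * F + 1 ∧
      (∀ a ∈ Y, ∀ b ∈ G.neighborFinset i, b ∉ Y →
        msg k a i ⟨k % d, Nat.mod_lt k hd⟩ ≤ msg k b i ⟨k % d, Nat.mod_lt k hd⟩) ∧
      (∀ a ∈ Z, ∀ b ∈ G.neighborFinset i, b ∉ Z →
        msg k b i ⟨k % d, Nat.mod_lt k hd⟩ ≤ msg k a i ⟨k % d, Nat.mod_lt k hd⟩) ∧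
      yv ∈ Psi (fun j : Y => msg k j i) F ∧
      zv ∈ Psi (fun j : Z => msg k j i) F ∧
      x (k + 1) i = ((1 : ℝ) / 3) • (x k i + yv + zv)

theorem stmt9 {V : Type*} [Fintype V] [DecidableEq V]
    (d F : ℕ) (hd : 0 < d) (G : SimpleGraph V) [DecidableRel G.Adj]
    (Fset : Finset V) (x : ℕ → V → (Fin d → ℝ))
    (msg : ℕ → V → V → (Fin d → ℝ))
    (halg : Algo1 d F hd G Fset x msg)
    (hB : (Fsetᶜ : Finset V).Nonempty)
    (hlocal : ∀ i : V, (Fset ∩ G.neighborFinset i).card ≤ F) :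
    ∀ (p : Fin d) (k : ℕ),
      (Fsetᶜ : Finset V).inf' hB (fun i => x k i p) ≤
        (Fsetᶜ : Finset V).inf' hB (fun i => x (k + 1) i p) ∧
      (Fsetᶜ : Finset V).sup' hB (fun i => x (k + 1) i p) ≤
        (Fsetᶜ : Finset V).sup' hB (fun i => x k i p) := by

  intro p k
  set m := (Fsetᶜ : Finset V).inf' hB (fun i => x k i p) with hm
  set M := (Fsetᶜ : Finset V).sup' hB (fun i => x k i p) with hM
  have main : ∀ i ∈ (Fsetᶜ : Finset V), m ≤ x (k+1) i p ∧ x (k+1) i p ≤ M := by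
    intro i hic
    have hi : i ∉ Fset := Finset.mem_compl.mp hic
    obtain ⟨Y, Z, yv, zv, hYsub, hZsub, hYcard, hZcard, _, _, hyv, hzv, hupd⟩ :=
      halg.update k i hi
    have key : ∀ (W : Finset V) (wv : Fin d → ℝ), W ⊆ G.neighborFinset i →
        W.card = (d+1)*F+1 → wv ∈ Psi (fun j : W => msg k j i) F →
        m ≤ wv p ∧ wv p ≤ M := by
      intro W wv hWsub hWcard hw
      have hcap : (W.filter (· ∈ Fset)).card ≤ F := by
        calc (W.filter (· ∈ Fset)).card ≤ (Fset ∩ G.neighborFinset i).card := by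
              apply Finset.card_le_card
              intro a ha
              simp only [Finset.mem_filter] at ha
              exact Finset.mem_inter.mpr ⟨ha.2, hWsub ha.1⟩
          _ ≤ F := hlocal i
      have hfc : (W.filter (fun j => j ∉ Fset)).card
          = W.card - (W.filter (· ∈ Fset)).card := by
        have := Finset.card_filter_add_card_filter_not
          (s := W) (p := fun j => j ∈ Fset)
        omega
      have hTcard : (W.attach.filter (fun j : {a // a ∈ W} => j.1 ∉ Fset)).card
          = (W.filter (fun j => j ∉ Fset)).card := by
        rw [Finset.filter_attach (fun j => j ∉ Fset) W]
        simp
      have hT : W.card - F ≤ (W.attach.filter (fun j : {a // a ∈ W} => j.1 ∉ Fset)).card := by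
        rw [hTcard, hfc]; omega
      obtain ⟨S, hSsub, hScard⟩ := Finset.exists_subset_card_eq hT
      have hmem : wv ∈ convexHull ℝ ((fun j : W => msg k j i) '' (S : Set W)) := by
        refine Set.mem_iInter₂.mp hw S ?_
        simp only [Set.mem_setOf_eq, Fintype.card_coe, hScard]
      have hconv : Convex ℝ ((fun v : Fin d → ℝ => v p) ⁻¹' Set.Icc m M) :=
        (convex_Icc m M).linear_preimage (LinearMap.proj (R := ℝ) (φ := fun _ : Fin d => ℝ) p)
      have hsub : (fun j : W => msg k j i) '' (S : Set W) ⊆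
          (fun v : Fin d → ℝ => v p) ⁻¹' Set.Icc m M := by
        rintro _ ⟨j, hj, rfl⟩
        have hjS : j ∈ S := hj
        have hjb : (j : V) ∉ Fset := by
          have := hSsub hjS
          exact (Finset.mem_filter.mp this).2
        show msg k (↑j) i ∈ _
        rw [halg.benign_msg k (↑j) i hjb]
        have hjc : (j : V) ∈ Fsetᶜ := Finset.mem_compl.mpr hjb
        exact ⟨Finset.inf'_le (fun i => x k i p) hjc, Finset.le_sup' (fun i => x k i p) hjc⟩
      exact convexHull_min hsub hconv hmem
    have hy := key Y yv hYsub hYcard hyv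
    have hz := key Z zv hZsub hZcard hzv
    have hx : m ≤ x k i p ∧ x k i p ≤ M :=
      ⟨Finset.inf'_le (fun i => x k i p) hic, Finset.le_sup' (fun i => x k i p) hic⟩
    rw [hupd]
    simp only [Pi.smul_apply, Pi.add_apply, smul_eq_mul]
    constructor <;> linarith [hy.1, hy.2, hz.1, hz.2, hx.1, hx.2]
  constructor
  · exact Finset.le_inf' _ _ fun i hi => (main i hi).1
  · exact Finset.sup'_le _ _ fun i hi => (main i hi).2
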